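/- Let J, H be Hilbert spaces, {gₙ} ⊂ H with bounded synthesis operator D ∈ B(ℓ², H), and K ∈ B(J, H) with R(K) ⊆ R(D). Then {gₙ} is a K-frame: there exist α, β > 0 with α‖K* f‖_J² ≤ ∑ₙ |⟨f, gₙ⟩|² ≤ β‖f‖² for all f ∈ H. -/

import Mathlib

open scoped ComplexInnerProductSpace ENNReal NNReal

set_option maxHeartbeats 1000000 in
/-- Let `J, H` be Hilbert spaces, `{gₙ} ⊂ H` with bounded synthesis operator
`D ∈ B(ℓ², H)`, and `K ∈ B(J, H)` with `R(K) ⊆ R(D)`. Then `{gₙ}` is a `K`-frame: there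
exist `α, β > 0` with `α‖K* f‖_J² ≤ ∑ₙ |⟨f, gₙ⟩|² ≤ β‖f‖² for all `f ∈ H`. -/
theorem stmt_16 {J H : Type*}
    [NormedAddCommGroup J] [InnerProductSpace ℂ J] [CompleteSpace J]
    [NormedAddCommGroup H] [InnerProductSpace ℂ H] [CompleteSpace H]
    (g : ℕ → H) (D : lp (fun _ : ℕ => ℂ) 2 →L[ℂ] H)
    (hD : ∀ c : lp (fun _ : ℕ => ℂ) 2, HasSum (fun n => c n • g n) (D c))
    (K : J →L[ℂ] H) (hrange : Set.range K ⊆ Set.range D) :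
    ∃ α β : ℝ, 0 < α ∧ 0 < β ∧ ∀ f : H,
      (Summable fun n => ‖⟪f, g n⟫‖ ^ 2) ∧
      α * ‖ContinuousLinearMap.adjoint K f‖ ^ 2 ≤ ∑' n, ‖⟪f, g n⟫‖ ^ 2 ∧
      ∑' n, ‖⟪f, g n⟫‖ ^ 2 ≤ β * ‖f‖ ^ 2 := by
  classical
  -- D applied to a standard basis vector gives g n
  have hDsingle : ∀ n : ℕ, D (lp.single 2 n (1 : ℂ)) = g n := by
    intro n
    refine (hD (lp.single 2 n (1 : ℂ))).unique ?_
    have : (fun m => (lp.single 2 n (1 : ℂ) : ∀ _ : ℕ, ℂ) m • g m)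
        = fun m => if m = n then g n else 0 := by
      funext m
      rw [lp.single_apply]
      split_ifs with h
      · subst h; simp
      · simp [Pi.single_apply, h]
    rw [this]
    exact hasSum_ite_eq n (g n)
  -- coordinates of the adjoint of D
  have hadj : ∀ (f : H) (n : ℕ), (ContinuousLinearMap.adjoint D f) n = ⟪g n, f⟫ := by
    intro f n
    have h1 : ⟪lp.single 2 n (1 : ℂ), ContinuousLinearMap.adjoint D f⟫
        = (ContinuousLinearMap.adjoint D f) n := by
      rw [lp.inner_single_left]
      simp
    rw [← h1, ContinuousLinearMap.adjoint_inner_right, hDsingle]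
  have hnormcoord : ∀ (f : H) (n : ℕ),
      ‖⟪f, g n⟫‖ = ‖(ContinuousLinearMap.adjoint D f) n‖ := by
    intro f n
    rw [hadj, norm_inner_symm]
  -- tsum equals the squared norm of the adjoint
  have hsum : ∀ f : H, Summable fun n => ‖⟪f, g n⟫‖ ^ 2 := by
    intro f
    have hm := lp.memℓp (ContinuousLinearMap.adjoint D f)
    have := hm.summable (by norm_num)
    have h2 : (fun n => ‖(ContinuousLinearMap.adjoint D f) n‖ ^ (2 : ℝ≥0∞).toReal)
        = fun n => ‖⟪f, g n⟫‖ ^ 2 := by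
      funext n
      rw [hnormcoord f n]
      norm_num
    rwa [h2] at this
  have htsum : ∀ f : H, ∑' n, ‖⟪f, g n⟫‖ ^ 2 = ‖ContinuousLinearMap.adjoint D f‖ ^ 2 := by
    intro f
    have h1 : ‖ContinuousLinearMap.adjoint D f‖ ^ (2 : ℝ≥0∞).toReal
        = ∑' n, ‖(ContinuousLinearMap.adjoint D f) n‖ ^ (2 : ℝ≥0∞).toReal :=
      lp.norm_rpow_eq_tsum (by norm_num) _
    have h2 : (fun n => ‖(ContinuousLinearMap.adjoint D f) n‖ ^ (2 : ℝ≥0∞).toReal)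
        = fun n => ‖⟪f, g n⟫‖ ^ 2 := by
      funext n
      rw [hnormcoord f n]
      norm_num
    rw [h2] at h1
    rw [← h1]
    norm_num
  -- construction of the bounded operator L with K = D ∘ L (Douglas factorization)
  set N : Submodule ℂ (lp (fun _ : ℕ => ℂ) 2) := LinearMap.ker (D : lp (fun _ : ℕ => ℂ) 2 →ₗ[ℂ] H) with hN
  haveI : CompleteSpace N := D.isClosed_ker.completeSpace_coe
  set U : Submodule ℂ (lp (fun _ : ℕ => ℂ) 2) := Nᗮ with hU
  have hUorth : Uᗮ = N := Submodule.orthogonal_orthogonal N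
  have hinj : ∀ p q : lp (fun _ : ℕ => ℂ) 2, p ∈ U → q ∈ U → D p = D q → p = q := by
    intro p q hp hq h
    have h1 : p - q ∈ N := by
      simp only [hN, LinearMap.mem_ker, map_sub, h, sub_self, ContinuousLinearMap.coe_coe]
    have h2 : p - q ∈ U := U.sub_mem hp hq
    have := (Submodule.disjoint_def.mp (Submodule.orthogonal_disjoint N)) _ h1 h2
    exact sub_eq_zero.mp this
  have hex : ∀ x : J, ∃ c : lp (fun _ : ℕ => ℂ) 2, c ∈ U ∧ D c = K x := by
    intro x
    obtain ⟨c, hc⟩ := hrange ⟨x, rfl⟩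
    refine ⟨U.orthogonalProjectionOnto c, (U.orthogonalProjectionOnto c).2, ?_⟩
    have hmem : c - U.orthogonalProjectionOnto c ∈ Uᗮ :=
      Submodule.sub_starProjection_mem_orthogonal (K := U) c
    rw [hUorth] at hmem
    have h0 : D (c - U.orthogonalProjectionOnto c) = 0 := hmem
    rw [map_sub, sub_eq_zero] at h0
    rw [← h0, hc]
  choose ℓ hmemU hDℓ using hex
  let L : J →ₗ[ℂ] lp (fun _ : ℕ => ℂ) 2 :=
    { toFun := ℓ
      map_add' := fun x y => by
        refine hinj _ _ (hmemU _) (U.add_mem (hmemU x) (hmemU y)) ?_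
        rw [hDℓ, map_add, map_add, hDℓ, hDℓ]
      map_smul' := fun c x => by
        refine hinj _ _ (hmemU _) (U.smul_mem c (hmemU x)) ?_
        rw [hDℓ, map_smul, map_smul, hDℓ]
        rfl }
  have hLcont : Continuous L := by
    refine L.continuous_of_seq_closed_graph ?_
    intro u x y hux huy
    have hyU : y ∈ U := by
      refine (Submodule.isClosed_orthogonal N).mem_of_tendsto huy ?_
      exact Filter.Eventually.of_forall fun n => hmemU (u n)
    have hDy : D y = K x := by
      have h1 : Filter.Tendsto (fun n => D (L (u n))) Filter.atTop (nhds (D y)) :=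
        (D.continuous.tendsto y).comp huy
      have h2 : Filter.Tendsto (fun n => K (u n)) Filter.atTop (nhds (K x)) :=
        (K.continuous.tendsto x).comp hux
      have h3 : (fun n => D (L (u n))) = fun n => K (u n) := by
        funext n; exact hDℓ (u n)
      rw [h3] at h1
      exact tendsto_nhds_unique h1 h2
    exact hinj _ _ hyU (hmemU x) (by rw [hDy]; exact (hDℓ x).symm)
  let Lc : J →L[ℂ] lp (fun _ : ℕ => ℂ) 2 := ⟨L, hLcont⟩
  have hKDL : K = D ∘L Lc := by
    ext x
    exact (hDℓ x).symm
  have hadjK : ∀ f : H, ‖ContinuousLinearMap.adjoint K f‖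
      ≤ ‖ContinuousLinearMap.adjoint Lc‖ * ‖ContinuousLinearMap.adjoint D f‖ := by
    intro f
    have : ContinuousLinearMap.adjoint K f
        = ContinuousLinearMap.adjoint Lc (ContinuousLinearMap.adjoint D f) := by
      rw [hKDL, ContinuousLinearMap.adjoint_comp]
      rfl
    rw [this]
    exact (ContinuousLinearMap.adjoint Lc).le_opNorm _
  -- conclusion
  set C : ℝ := ‖ContinuousLinearMap.adjoint Lc‖ with hC
  have hC0 : 0 ≤ C := norm_nonneg _
  refine ⟨1 / (C ^ 2 + 1), ‖D‖ ^ 2 + 1, by positivity, by positivity, fun f => ?_⟩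
  refine ⟨hsum f, ?_, ?_⟩
  · rw [htsum f]
    have h1 := hadjK f
    have h2 : ‖ContinuousLinearMap.adjoint K f‖ ^ 2
        ≤ C ^ 2 * ‖ContinuousLinearMap.adjoint D f‖ ^ 2 := by
      have := mul_self_le_mul_self (norm_nonneg _) h1
      nlinarith [norm_nonneg (ContinuousLinearMap.adjoint K f),
        norm_nonneg (ContinuousLinearMap.adjoint D f)]
    have h3 : 0 ≤ ‖ContinuousLinearMap.adjoint D f‖ ^ 2 := by positivity
    rw [div_mul_eq_mul_div, one_mul, div_le_iff₀ (by positivity)]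
    nlinarith
  · rw [htsum f]
    have h1 : ‖ContinuousLinearMap.adjoint D f‖ ≤ ‖D‖ * ‖f‖ := by
      calc ‖ContinuousLinearMap.adjoint D f‖
          ≤ ‖ContinuousLinearMap.adjoint D‖ * ‖f‖ := (ContinuousLinearMap.adjoint D).le_opNorm f
        _ = ‖D‖ * ‖f‖ := by
          congr 1
          exact LinearIsometryEquiv.norm_map ContinuousLinearMap.adjoint D
    nlinarith [norm_nonneg (ContinuousLinearMap.adjoint D f), norm_nonneg f, norm_nonneg D]
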